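/- Let G be a subgroup of Equiv.Perm ℕ that is closed under pointwise convergence. Let d : ℕ → Equiv.Perm ℕ be a sequence with d(n) ∈ G and d(n) ≠ 1 for all n, converging pointwise to the identity (for every m there is N such that d(n)(m) = m for all n ≥ N). Then there exists a strictly increasing sequence j : ℕ → ℕ such that: for every sequence of group words w : ℕ → FreeGroup (ℕ ⊕ ℕ) obeying j, there exists a sequence b : ℕ → Equiv.Perm ℕ with b(n) ∈ G and, for all n, b(n) equals the evaluation of the word w(n) under the substitution sending the generator inl(i) to d(n+1+i) and the generator inr(i) to b(n+1+i) (via FreeGroup.lift). -/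

import Mathlib

open Finset

namespace Shelah2

/-- Permutations fixing all points `≤ q`, as a subgroup. -/
def fixSub (q : ℕ) : Subgroup (Equiv.Perm ℕ) where
  carrier := {g | ∀ p ≤ q, g p = p}
  one_mem' := fun p _ => rfl
  mul_mem' := by
    intro a b ha hb p hp
    show a (b p) = p
    rw [hb p hp, ha p hp]
  inv_mem' := by
    intro a ha p hp
    show a⁻¹ p = p
    conv_lhs => rw [← ha p hp]
    exact Equiv.symm_apply_apply a p

lemma mem_fixSub {q : ℕ} {g : Equiv.Perm ℕ} (h : ∀ p ≤ q, g p = p) : g ∈ fixSub q := h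

lemma fixSub_apply {q : ℕ} {g : Equiv.Perm ℕ} (h : g ∈ fixSub q) {p : ℕ} (hp : p ≤ q) :
    g p = p := h p hp

lemma lift_mem {H : Type*} [Group H] (S : Subgroup H) (f : ℕ ⊕ ℕ → H)
    (hf : ∀ a, f a ∈ S) (x : FreeGroup (ℕ ⊕ ℕ)) : FreeGroup.lift f x ∈ S := by
  induction x with
  | C1 => simp [S.one_mem]
  | of a =>
    rw [FreeGroup.lift_apply_of]; exact hf a
  | inv_of a _ =>
    rw [map_inv, FreeGroup.lift_apply_of]; exact S.inv_mem (hf a)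
  | mul a b ha hb => rw [map_mul]; exact S.mul_mem ha hb

/-- The stage-`J` approximate solution. -/
def bA (d : ℕ → Equiv.Perm ℕ) (w : ℕ → FreeGroup (ℕ ⊕ ℕ)) (J : ℕ) (r : ℕ) : Equiv.Perm ℕ :=
  if h : J ≤ r then d (r + 1)
  else FreeGroup.lift (Sum.elim (fun i => d (r + 1 + i)) (fun i => bA d w J (r + 1 + i))) (w r)
termination_by J - r
decreasing_by omega

/-- The cost (expansion size) of the stage-`J` solution at `r`. -/
def costA (w : ℕ → FreeGroup (ℕ ⊕ ℕ)) (J : ℕ) (r : ℕ) : ℕ :=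
  if h : J ≤ r then 1
  else ((w r).toWord.map
    (fun x => Sum.elim (fun _ => 1) (fun i => costA w J (r + 1 + i)) x.1)).sum
termination_by J - r
decreasing_by omega

lemma bA_of_le {d w J r} (h : J ≤ r) : bA d w J r = d (r + 1) := by
  rw [bA]; simp [h]

lemma bA_of_lt {d w J r} (h : r < J) :
    bA d w J r = FreeGroup.lift
      (Sum.elim (fun i => d (r + 1 + i)) (fun i => bA d w J (r + 1 + i))) (w r) := by
  rw [bA]; simp [Nat.not_le.2 h]

lemma costA_of_le {w J r} (h : J ≤ r) : costA w J r = 1 := by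
  rw [costA]; simp [h]

lemma costA_of_lt {w J r} (h : r < J) :
    costA w J r = ((w r).toWord.map
      (fun x => Sum.elim (fun _ => 1) (fun i => costA w J (r + 1 + i)) x.1)).sum := by
  rw [costA]; simp [Nat.not_le.2 h]

lemma bA_mem {H : Subgroup (Equiv.Perm ℕ)} {d w} (hd : ∀ n, d n ∈ H) (J : ℕ) :
    ∀ fuel r, J - r ≤ fuel → bA d w J r ∈ H := by
  intro fuel
  induction fuel with
  | zero =>
    intro r hr
    rw [bA_of_le (by omega)]; exact hd _
  | succ fuel ih =>
    intro r hr
    by_cases h : J ≤ r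
    · rw [bA_of_le h]; exact hd _
    · rw [bA_of_lt (by omega)]
      refine lift_mem _ _ ?_ _
      rintro (i | i)
      · exact hd _
      · exact ih (r + 1 + i) (by omega)

lemma bA_fix {d w} (q K : ℕ) (hd : ∀ k, K < k → ∀ p ≤ q, d k p = p) (J : ℕ) :
    ∀ fuel r, J - r ≤ fuel → K < r → bA d w J r ∈ fixSub q := by
  intro fuel
  induction fuel with
  | zero =>
    intro r hr hK
    rw [bA_of_le (by omega)]; exact mem_fixSub (hd _ (by omega))
  | succ fuel ih =>
    intro r hr hK
    by_cases h : J ≤ r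
    · rw [bA_of_le h]; exact mem_fixSub (hd _ (by omega))
    · rw [bA_of_lt (by omega)]
      refine lift_mem _ _ ?_ _
      rintro (i | i)
      · exact mem_fixSub (hd _ (by omega))
      · exact ih (r + 1 + i) (by omega) (by omega)

lemma costA_bound {w} (J : ℕ) :
    ∀ fuel r, J - r ≤ fuel → costA w J r ≤ 2 ^ (∑ i ∈ Icc r J, (w i).norm) := by
  intro fuel
  induction fuel with
  | zero =>
    intro r hr
    rw [costA_of_le (by omega)]
    exact Nat.one_le_two_pow
  | succ fuel ih =>
    intro r hr
    by_cases h : J ≤ r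
    · rw [costA_of_le h]; exact Nat.one_le_two_pow
    · rw [costA_of_lt (by omega)]
      have hsplit : Icc r J = insert r (Icc (r + 1) J) := by
        ext t; simp only [mem_Icc, mem_insert]; omega
      have hnotmem : r ∉ Icc (r + 1) J := by simp
      have hM : ∀ x ∈ ((w r).toWord.map
          (fun x => Sum.elim (fun _ => 1) (fun i => costA w J (r + 1 + i)) x.1)),
          x ≤ 2 ^ (∑ i ∈ Icc (r + 1) J, (w i).norm) := by
        intro x hx
        rw [List.mem_map] at hx
        obtain ⟨a, _, rfl⟩ := hx
        rcases a.1 with i | i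
        · exact Nat.one_le_two_pow
        · simp only [Sum.elim_inr]
          by_cases h2 : J ≤ r + 1 + i
          · rw [costA_of_le h2]; exact Nat.one_le_two_pow
          · calc costA w J (r + 1 + i) ≤ 2 ^ (∑ i2 ∈ Icc (r + 1 + i) J, (w i2).norm) :=
                ih _ (by omega)
              _ ≤ 2 ^ (∑ i2 ∈ Icc (r + 1) J, (w i2).norm) := by
                apply Nat.pow_le_pow_right (by norm_num)
                apply Finset.sum_le_sum_of_subset
                intro t ht
                simp only [mem_Icc] at *
                omega
      calc ((w r).toWord.map _).sum
          ≤ ((w r).toWord.map _).length • 2 ^ (∑ i ∈ Icc (r + 1) J, (w i).norm) :=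
            List.sum_le_card_nsmul _ _ hM
        _ = (w r).norm * 2 ^ (∑ i ∈ Icc (r + 1) J, (w i).norm) := by
            rw [List.length_map, smul_eq_mul]; rfl
        _ ≤ 2 ^ (w r).norm * 2 ^ (∑ i ∈ Icc (r + 1) J, (w i).norm) :=
            Nat.mul_le_mul_right _ (Nat.le_of_lt (Nat.lt_two_pow_self))
        _ = 2 ^ (∑ i ∈ Icc r J, (w i).norm) := by
            rw [hsplit, Finset.sum_insert hnotmem, pow_add]

lemma listStep (th : ℕ → ℕ) (hth : Monotone th) (Λ : ℕ)
    (ev ev' : (ℕ ⊕ ℕ) × Bool → Equiv.Perm ℕ) (c : (ℕ ⊕ ℕ) × Bool → ℕ) :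
    ∀ L : List ((ℕ ⊕ ℕ) × Bool),
      (∀ x ∈ L, ∀ p ℓ, p ≤ th ℓ → ℓ + c x ≤ Λ →
        (ev x p = ev' x p ∧ ev x p ≤ th (ℓ + c x)) ∧
        ((ev x)⁻¹ p = (ev' x)⁻¹ p ∧ (ev x)⁻¹ p ≤ th (ℓ + c x))) →
      ∀ p ℓ, p ≤ th ℓ → ℓ + (L.map c).sum ≤ Λ →
        ((L.map ev).prod p = (L.map ev').prod p ∧ (L.map ev).prod p ≤ th (ℓ + (L.map c).sum)) ∧
        (((L.map ev).prod)⁻¹ p = ((L.map ev').prod)⁻¹ p ∧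
          ((L.map ev).prod)⁻¹ p ≤ th (ℓ + (L.map c).sum)) := by
  intro L
  induction L with
  | nil =>
    intro _ p ℓ hp _
    simp only [List.map_nil, List.prod_nil, List.sum_nil, Nat.add_zero, inv_one]
    exact ⟨⟨by trivial, hp⟩, by trivial, hp⟩
  | cons x L ih =>
    intro hok p ℓ hp hbud
    simp only [List.map_cons, List.prod_cons, List.sum_cons] at *
    have hokL : ∀ y ∈ L, ∀ p ℓ, p ≤ th ℓ → ℓ + c y ≤ Λ →
        (ev y p = ev' y p ∧ ev y p ≤ th (ℓ + c y)) ∧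
        ((ev y)⁻¹ p = (ev' y)⁻¹ p ∧ (ev y)⁻¹ p ≤ th (ℓ + c y)) :=
      fun y hy => hok y (List.mem_cons_of_mem _ hy)
    have hokx := hok x (List.mem_cons_self)
    constructor
    · -- forward
      have hR := (ih hokL p ℓ hp (by omega)).1
      have hx := (hokx ((L.map ev).prod p) (ℓ + (L.map c).sum) hR.2 (by omega)).1
      rw [Equiv.Perm.mul_apply, Equiv.Perm.mul_apply, ← hR.1]
      exact ⟨hx.1, le_trans hx.2 (hth (by omega))⟩
    · -- inverse
      have hx := (hokx p ℓ hp (by omega)).2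
      have hR := (ih hokL ((ev x)⁻¹ p) (ℓ + c x) hx.2 (by omega)).2
      rw [mul_inv_rev, mul_inv_rev, Equiv.Perm.mul_apply, Equiv.Perm.mul_apply, ← hx.1]
      exact ⟨hR.1, le_trans hR.2 (hth (by omega))⟩

lemma main (d : ℕ → Equiv.Perm ℕ) (w : ℕ → FreeGroup (ℕ ⊕ ℕ)) (th : ℕ → ℕ)
    (hth : Monotone th)
    (hdrift : ∀ n ℓ p, p ≤ th ℓ → d n p ≤ th (ℓ + 1) ∧ (d n)⁻¹ p ≤ th (ℓ + 1))
    (J J1 J' Λ : ℕ) (hJJ' : J ≤ J')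
    (hwin : ∀ t, J ≤ t → t ≤ J1 → w t = FreeGroup.of (Sum.inl 0))
    (hfix : ∀ k, J1 < k → ∀ p ≤ th Λ, d k p = p) :
    ∀ fuel r p ℓ, J' - r ≤ fuel → p ≤ th ℓ → ℓ + costA w J r ≤ Λ →
      (bA d w J r p = bA d w J' r p ∧ bA d w J r p ≤ th (ℓ + costA w J r)) ∧
      ((bA d w J r)⁻¹ p = (bA d w J' r)⁻¹ p ∧ (bA d w J r)⁻¹ p ≤ th (ℓ + costA w J r)) := by
  intro fuel
  induction fuel with
  | zero =>
    intro r p ℓ hfu hp _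
    have h' : J' ≤ r := by omega
    have hr : J ≤ r := le_trans hJJ' h'
    rw [bA_of_le h', bA_of_le hr, costA_of_le hr]
    exact ⟨⟨by trivial, (hdrift _ ℓ p hp).1⟩, by trivial, (hdrift _ ℓ p hp).2⟩
  | succ fuel ih =>
    intro r p ℓ hfu hp hbud
    by_cases h' : J' ≤ r
    · have hr : J ≤ r := le_trans hJJ' h'
      rw [bA_of_le h', bA_of_le hr, costA_of_le hr]
      exact ⟨⟨by trivial, (hdrift _ ℓ p hp).1⟩, by trivial, (hdrift _ ℓ p hp).2⟩
    · have hrJ' : r < J' := by omega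
      by_cases hr : J ≤ r
      · by_cases hr1 : r ≤ J1
        · -- window case
          have hwr := hwin r hr hr1
          rw [costA_of_le hr, bA_of_le hr, bA_of_lt hrJ', hwr, FreeGroup.lift_apply_of]
          simp only [Sum.elim_inl, Nat.add_zero]
          exact ⟨⟨by trivial, (hdrift _ ℓ p hp).1⟩, by trivial, (hdrift _ ℓ p hp).2⟩
        · -- beyond the window
          have hΛ : ℓ ≤ Λ := by omega
          have hpΛ : p ≤ th Λ := le_trans hp (hth hΛ)
          have hfixr : bA d w J' r ∈ fixSub (th Λ) :=
            bA_fix (th Λ) J1 hfix J' (J' + 1) r (by omega) (by omega)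
          have hd1 : d (r + 1) ∈ fixSub (th Λ) := mem_fixSub (hfix (r + 1) (by omega))
          rw [bA_of_le hr]
          have hb1 : ℓ ≤ ℓ + costA w J r := by omega
          refine ⟨⟨?_, ?_⟩, ?_, ?_⟩
          · rw [fixSub_apply hd1 hpΛ, fixSub_apply hfixr hpΛ]
          · rw [fixSub_apply hd1 hpΛ]; exact le_trans hp (hth hb1)
          · rw [fixSub_apply ((fixSub _).inv_mem hd1) hpΛ,
              fixSub_apply ((fixSub _).inv_mem hfixr) hpΛ]
          · rw [fixSub_apply ((fixSub _).inv_mem hd1) hpΛ]; exact le_trans hp (hth hb1)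
      · -- below the stage cutoff: word evaluation on both sides
        have hrJ : r < J := by omega
        have e1 : ∀ (φ : ℕ ⊕ ℕ → Equiv.Perm ℕ),
            FreeGroup.lift φ (w r)
              = ((w r).toWord.map (fun x => cond x.2 (φ x.1) (φ x.1)⁻¹)).prod := by
          intro φ
          conv_lhs => rw [← FreeGroup.mk_toWord (x := w r)]
          rw [FreeGroup.lift_mk]
        rw [bA_of_lt hrJ, bA_of_lt hrJ', costA_of_lt hrJ] at *
        rw [e1, e1]
        refine listStep th hth Λ _ _ _ ((w r).toWord) ?_ p ℓ hp hbud
        rintro ⟨a, bb⟩ hx p' ℓ' hp' hb'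
        simp only at hb' ⊢
        have hcore : ∀ (g g' : Equiv.Perm ℕ),
            ((∀ q ℓ0, q ≤ th ℓ0 →
                ℓ0 + (Sum.elim (fun _ => 1) (fun i => costA w J (r + 1 + i)) a) ≤ Λ →
              (g q = g' q ∧ g q ≤ th (ℓ0 + (Sum.elim (fun _ => 1)
                  (fun i => costA w J (r + 1 + i)) a))) ∧
              ((g)⁻¹ q = (g')⁻¹ q ∧ (g)⁻¹ q ≤ th (ℓ0 + (Sum.elim (fun _ => 1)
                  (fun i => costA w J (r + 1 + i)) a))))) →
            (cond bb g g⁻¹ p' = cond bb g' g'⁻¹ p' ∧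
              cond bb g g⁻¹ p' ≤ th (ℓ' + (Sum.elim (fun _ => 1)
                (fun i => costA w J (r + 1 + i)) a))) ∧
            ((cond bb g g⁻¹)⁻¹ p' = (cond bb g' g'⁻¹)⁻¹ p' ∧
              (cond bb g g⁻¹)⁻¹ p' ≤ th (ℓ' + (Sum.elim (fun _ => 1)
                (fun i => costA w J (r + 1 + i)) a))) := by
          intro g g' H
          cases bb
          · simp only [cond_false, inv_inv]
            exact ⟨(H p' ℓ' hp' hb').2, (H p' ℓ' hp' hb').1⟩
          · simp only [cond_true]
            exact H p' ℓ' hp' hb'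
        rcases a with i | i
        · refine hcore _ _ ?_
          intro q ℓ0 hq hb0
          simp only [Sum.elim_inl] at *
          exact ⟨⟨by trivial, (hdrift _ ℓ0 q hq).1⟩, by trivial, (hdrift _ ℓ0 q hq).2⟩
        · refine hcore _ _ ?_
          intro q ℓ0 hq hb0
          simp only [Sum.elim_inr] at *
          by_cases h2 : J' ≤ r + 1 + i
          · have hJ2 : J ≤ r + 1 + i := le_trans hJJ' h2
            rw [bA_of_le h2, bA_of_le hJ2, costA_of_le hJ2]
            exact ⟨⟨by trivial, (hdrift _ ℓ0 q hq).1⟩, by trivial, (hdrift _ ℓ0 q hq).2⟩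
          · exact ih (r + 1 + i) q ℓ0 (by omega) hq hb0

end Shelah2




/-- A subgroup `G` of `Equiv.Perm ℕ` is closed under pointwise convergence if every
permutation `π` of `ℕ` such that for each `k` there exists `g ∈ G` agreeing with `π`
(and with `π⁻¹`) on all `i ≤ k` belongs to `G`. -/
def ClosedUnderPointwiseConvergence (G : Subgroup (Equiv.Perm ℕ)) : Prop :=
  ∀ π : Equiv.Perm ℕ,
    (∀ k : ℕ, ∃ g ∈ G, ∀ i ≤ k, g i = π i ∧ g⁻¹ i = π⁻¹ i) → π ∈ G

/-- A sequence of group words `w : ℕ → FreeGroup (ℕ ⊕ ℕ)` (with `Sum.inl i` playing the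
role of `x_{i+1}` and `Sum.inr i` that of `y_{i+1}`) obeys a strictly increasing
`j : ℕ → ℕ` if for all `n*`, `m*` there are `i₀ < i₁` with `m* < i₀`, `n* < i₁`, such
that `w t` is the trivial word `x₁` whenever `j i₀ ≤ t ≤ j i₁`, and
`∑_{i=n*}^{j i₀} length (w i) < i₁ - i₀` where the length of a word is the length of its
reduced form (`FreeGroup.norm`). -/
def ObeysWords (w : ℕ → FreeGroup (ℕ ⊕ ℕ)) (j : ℕ → ℕ) : Prop :=
  ∀ nstar mstar : ℕ, ∃ i0 i1 : ℕ, mstar < i0 ∧ nstar < i1 ∧ i0 < i1 ∧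
    (∀ t, j i0 ≤ t → t ≤ j i1 → w t = FreeGroup.of (Sum.inl 0)) ∧
    (∑ i ∈ Finset.Icc nstar (j i0), (w i).norm) < i1 - i0

/-- Shelah's Proposition 2(2): for any sequence `d` of nonidentity elements of a
pointwise-closed subgroup `G ≤ Equiv.Perm ℕ` converging pointwise to the identity, there
is a strictly increasing `j : ℕ → ℕ` such that for every sequence of group words `w`
obeying `j`, the system of equations
`b n = w n (d (n+1), d (n+2), …; b (n+1), b (n+2), …)` has a solution in `G`. -/
theorem exists_j_solvable_words (G : Subgroup (Equiv.Perm ℕ))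
    (hG : ClosedUnderPointwiseConvergence G)
    (d : ℕ → Equiv.Perm ℕ) (hdG : ∀ n, d n ∈ G) (hd1 : ∀ n, d n ≠ 1)
    (hconv : ∀ m : ℕ, ∃ N : ℕ, ∀ n ≥ N, d n m = m) :
    ∃ j : ℕ → ℕ, StrictMono j ∧ ∀ w : ℕ → FreeGroup (ℕ ⊕ ℕ), ObeysWords w j →
      ∃ b : ℕ → Equiv.Perm ℕ, (∀ n, b n ∈ G) ∧
        ∀ n, b n = FreeGroup.lift
          (Sum.elim (fun i => d (n + 1 + i)) (fun i => b (n + 1 + i))) (w n) := by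
  classical
  open Shelah2 in
  -- a uniform modulus of pointwise convergence
  choose N0 hN0 using hconv
  set Ns : ℕ → ℕ := fun q => (Finset.range (q + 1)).sup N0 with hNsdef
  have hNs_spec : ∀ q n, Ns q ≤ n → ∀ m ≤ q, d n m = m := by
    intro q n hn m hm
    exact hN0 m n (le_trans (Finset.le_sup (Finset.mem_range.2 (by omega))) hn)
  have hNs_mono : Monotone Ns := fun a b hab =>
    Finset.sup_mono (Finset.range_subset_range.2 (by omega))
  -- the level function th
  let th : ℕ → ℕ := fun i => Nat.rec 0 (fun _ prev =>
    max (prev + 1) ((Finset.range (Ns prev + 1)).sup (fun n =>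
      (Finset.range (prev + 1)).sup (fun m => max (d n m) ((d n)⁻¹ m))))) i
  have th_succ : ∀ i, th (i + 1) = max (th i + 1) ((Finset.range (Ns (th i) + 1)).sup (fun n =>
      (Finset.range (th i + 1)).sup (fun m => max (d n m) ((d n)⁻¹ m)))) := fun i => rfl
  have th_lt : ∀ i, th i < th (i + 1) := by
    intro i
    rw [th_succ i]
    have := le_max_left (th i + 1) ((Finset.range (Ns (th i) + 1)).sup (fun n =>
      (Finset.range (th i + 1)).sup (fun m => max (d n m) ((d n)⁻¹ m))))
    omega
  have th_smono : StrictMono th := strictMono_nat_of_lt_succ th_lt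
  have th_mono : Monotone th := th_smono.monotone
  have th_le_self : ∀ i, i ≤ th i := fun i => th_smono.le_apply
  have hdrift : ∀ n ℓ p, p ≤ th ℓ → d n p ≤ th (ℓ + 1) ∧ (d n)⁻¹ p ≤ th (ℓ + 1) := by
    intro n ℓ p hp
    by_cases hn : n ≤ Ns (th ℓ)
    · have h1 : (Finset.range (Ns (th ℓ) + 1)).sup (fun n =>
          (Finset.range (th ℓ + 1)).sup (fun m => max (d n m) ((d n)⁻¹ m))) ≤ th (ℓ + 1) := by
        rw [th_succ ℓ]; exact le_max_right _ _
      have h2 : max (d n p) ((d n)⁻¹ p) ≤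
          (Finset.range (th ℓ + 1)).sup (fun m => max (d n m) ((d n)⁻¹ m)) :=
        Finset.le_sup (s := Finset.range (th ℓ + 1)) (b := p)
          (f := fun m => max (d n m) ((d n)⁻¹ m)) (Finset.mem_range.2 (by omega))
      have h3 : (Finset.range (th ℓ + 1)).sup (fun m => max (d n m) ((d n)⁻¹ m)) ≤
          (Finset.range (Ns (th ℓ) + 1)).sup (fun n =>
            (Finset.range (th ℓ + 1)).sup (fun m => max (d n m) ((d n)⁻¹ m))) :=
        Finset.le_sup (s := Finset.range (Ns (th ℓ) + 1)) (b := n)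
          (f := fun n => (Finset.range (th ℓ + 1)).sup
          (fun m => max (d n m) ((d n)⁻¹ m))) (Finset.mem_range.2 (by omega))
      constructor
      · exact le_trans (le_trans (le_max_left _ _) (le_trans h2 h3)) h1
      · exact le_trans (le_trans (le_max_right _ _) (le_trans h2 h3)) h1
    · have hfixn : d n p = p := hNs_spec (th ℓ) n (by omega) p hp
      have hfixn' : (d n)⁻¹ p = p := by
        conv_lhs => rw [← hfixn]
        exact Equiv.symm_apply_apply _ _
      refine ⟨?_, ?_⟩
      · rw [hfixn]; exact le_trans hp (th_mono (Nat.le_succ ℓ))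
      · rw [hfixn']; exact le_trans hp (th_mono (Nat.le_succ ℓ))
  -- the fast-growing sequence j
  refine ⟨fun i => i + Ns (th (i + 2 ^ i)), ?_, ?_⟩
  · apply strictMono_nat_of_lt_succ
    intro i
    have h2 : (2:ℕ) ^ i ≤ 2 ^ (i + 1) := Nat.pow_le_pow_right (by norm_num) (by omega)
    have := hNs_mono (th_mono (show i + 2 ^ i ≤ (i + 1) + 2 ^ (i + 1) by omega))
    omega
  intro w hw
  set j : ℕ → ℕ := fun i => i + Ns (th (i + 2 ^ i)) with hjdef
  have hj_ge : ∀ i, i ≤ j i := fun i => Nat.le_add_right _ _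
  have hjmono : Monotone j := by
    intro a b hab
    have h2 : (2:ℕ) ^ a ≤ 2 ^ b := Nat.pow_le_pow_right (by norm_num) hab
    have := hNs_mono (th_mono (show a + 2 ^ a ≤ b + 2 ^ b by omega))
    simp only [hjdef]
    omega
  have hjfix : ∀ i k, j i < k → ∀ p ≤ th (i + 2 ^ i), d k p = p := by
    intro i k hk p hp
    refine hNs_spec _ k ?_ p hp
    simp only [hjdef] at hk
    omega
  -- choose the stages
  choose f0 f1 hmlt hnlt hordlt hwinf hsumf using hw 0
  set mst : ℕ → ℕ := fun s => Nat.rec 0 (fun s prev => max (f1 prev) (s + 1)) s with hmstdef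
  set i0 : ℕ → ℕ := fun s => f0 (mst s) with hi0def
  set i1 : ℕ → ℕ := fun s => f1 (mst s) with hi1def
  have mst_ge : ∀ s, s ≤ mst s := by
    intro s
    cases s with
    | zero => exact le_refl _
    | succ s => exact le_trans (Nat.le_max_right _ _) (le_refl _)
  have hsi0 : ∀ s, s < i0 s := fun s => lt_of_le_of_lt (mst_ge s) (hmlt (mst s))
  have h01 : ∀ s, i0 s < i1 s := fun s => hordlt (mst s)
  have h10 : ∀ s, i1 s < i0 (s + 1) := by
    intro s
    have h1 : i1 s ≤ mst (s + 1) := le_trans (Nat.le_max_left _ _) (le_refl _)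
    exact lt_of_le_of_lt h1 (hmlt (mst (s + 1)))
  have hi0smono : StrictMono i0 :=
    strictMono_nat_of_lt_succ (fun s => lt_trans (h01 s) (h10 s))
  have hwin : ∀ s t, j (i0 s) ≤ t → t ≤ j (i1 s) → w t = FreeGroup.of (Sum.inl 0) :=
    fun s => hwinf (mst s)
  have hsum : ∀ s, (∑ i ∈ Finset.Icc 0 (j (i0 s)), (w i).norm) < i1 s - i0 s :=
    fun s => hsumf (mst s)
  -- the cost of any index at stage s is at most 2 ^ (i1 s)
  have hcost : ∀ s n, costA w (j (i0 s)) n ≤ 2 ^ (i1 s) := by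
    intro s n
    by_cases hn : j (i0 s) ≤ n
    · rw [costA_of_le hn]; exact Nat.one_le_two_pow
    · have h1 := costA_bound (w := w) (j (i0 s)) (j (i0 s)) n (Nat.sub_le _ _)
      have h2 : (∑ i ∈ Finset.Icc n (j (i0 s)), (w i).norm) ≤
          (∑ i ∈ Finset.Icc 0 (j (i0 s)), (w i).norm) := by
        apply Finset.sum_le_sum_of_subset
        intro t ht
        simp only [Finset.mem_Icc] at *
        omega
      have h3 := hsum s
      calc costA w (j (i0 s)) n ≤ 2 ^ (∑ i ∈ Finset.Icc n (j (i0 s)), (w i).norm) := h1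
        _ ≤ 2 ^ (i1 s) := Nat.pow_le_pow_right (by norm_num) (by omega)
  -- stabilization
  have stab : ∀ s s', s ≤ s' → ∀ n m, m ≤ i0 s →
      (bA d w (j (i0 s)) n m = bA d w (j (i0 s')) n m ∧
       (bA d w (j (i0 s)) n)⁻¹ m = (bA d w (j (i0 s')) n)⁻¹ m) := by
    intro s s' hss n m hm
    have hbud : m + costA w (j (i0 s)) n ≤ i1 s + 2 ^ (i1 s) := by
      have h1 := hcost s n
      have h2 : m ≤ i1 s := by have := h01 s; omega
      omega
    have h := main d w th th_mono hdrift (j (i0 s)) (j (i1 s)) (j (i0 s')) (i1 s + 2 ^ (i1 s))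
      (hjmono (hi0smono.monotone hss))
      (hwin s) (hjfix (i1 s)) (j (i0 s')) n m m (Nat.sub_le _ _) (th_le_self m) hbud
    exact ⟨h.1.1, h.2.1⟩
  -- the limit permutations
  have hbex : ∀ n, ∃ bb : Equiv.Perm ℕ,
      (∀ m, bb m = bA d w (j (i0 m)) n m) ∧
      (∀ m, bb⁻¹ m = (bA d w (j (i0 m)) n)⁻¹ m) := by
    intro n
    have hleft : ∀ m, (fun m => (bA d w (j (i0 m)) n)⁻¹ m)
        ((fun m => bA d w (j (i0 m)) n m) m) = m := by
      intro m
      show (bA d w (j (i0 (bA d w (j (i0 m)) n m))) n)⁻¹ (bA d w (j (i0 m)) n m) = m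
      have h1 := (stab m (max m (bA d w (j (i0 m)) n m)) (le_max_left _ _) n m
        (le_of_lt (hsi0 m))).1
      have h2 := (stab (bA d w (j (i0 m)) n m) (max m (bA d w (j (i0 m)) n m))
        (le_max_right _ _) n (bA d w (j (i0 m)) n m) (le_of_lt (hsi0 _))).2
      rw [h2]
      generalize (max m (bA d w (j (i0 m)) n m)) = s0 at h1 ⊢
      rw [h1]
      exact Equiv.symm_apply_apply _ _
    have hright : ∀ m, (fun m => bA d w (j (i0 m)) n m)
        ((fun m => (bA d w (j (i0 m)) n)⁻¹ m) m) = m := by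
      intro m
      show bA d w (j (i0 ((bA d w (j (i0 m)) n)⁻¹ m))) n ((bA d w (j (i0 m)) n)⁻¹ m) = m
      have h1 := (stab m (max m ((bA d w (j (i0 m)) n)⁻¹ m)) (le_max_left _ _) n m
        (le_of_lt (hsi0 m))).2
      have h2 := (stab ((bA d w (j (i0 m)) n)⁻¹ m) (max m ((bA d w (j (i0 m)) n)⁻¹ m))
        (le_max_right _ _) n ((bA d w (j (i0 m)) n)⁻¹ m) (le_of_lt (hsi0 _))).1
      rw [h2]
      generalize (max m ((bA d w (j (i0 m)) n)⁻¹ m)) = s0 at h1 ⊢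
      rw [h1]
      exact Equiv.apply_symm_apply _ _
    refine ⟨⟨fun m => bA d w (j (i0 m)) n m, fun m => (bA d w (j (i0 m)) n)⁻¹ m,
      hleft, hright⟩, fun m => rfl, fun m => rfl⟩
  set b : ℕ → Equiv.Perm ℕ := fun n => (hbex n).choose with hbdef
  have hbapp : ∀ n m, b n m = bA d w (j (i0 m)) n m := fun n m => ((hbex n).choose_spec.1 m)
  have hbinv : ∀ n m, (b n)⁻¹ m = (bA d w (j (i0 m)) n)⁻¹ m :=
    fun n m => ((hbex n).choose_spec.2 m)
  have hbapp' : ∀ n m s, m ≤ s → b n m = bA d w (j (i0 s)) n m := by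
    intro n m s hms
    rw [hbapp]
    exact (stab m s hms n m (le_of_lt (hsi0 m))).1
  have hbinv' : ∀ n m s, m ≤ s → (b n)⁻¹ m = (bA d w (j (i0 s)) n)⁻¹ m := by
    intro n m s hms
    rw [hbinv]
    exact (stab m s hms n m (le_of_lt (hsi0 m))).2
  refine ⟨b, ?_, ?_⟩
  · -- membership in G
    intro n
    apply hG
    intro k
    refine ⟨bA d w (j (i0 k)) n, bA_mem hdG (j (i0 k)) (j (i0 k)) n (Nat.sub_le _ _), ?_⟩
    intro i hik
    exact ⟨(hbapp' n i k hik).symm, (hbinv' n i k hik).symm⟩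
  · -- the equations
    intro n
    have e1 : ∀ (φ : ℕ ⊕ ℕ → Equiv.Perm ℕ),
        FreeGroup.lift φ (w n)
          = ((w n).toWord.map (fun x => cond x.2 (φ x.1) (φ x.1)⁻¹)).prod := by
      intro φ
      conv_lhs => rw [← FreeGroup.mk_toWord (x := w n)]
      rw [FreeGroup.lift_mk]
    set φlim : ℕ ⊕ ℕ → Equiv.Perm ℕ :=
      Sum.elim (fun i => d (n + 1 + i)) (fun i => b (n + 1 + i)) with hφlimdef
    have conv : ∀ L : List ((ℕ ⊕ ℕ) × Bool), ∀ m : ℕ, ∃ s0 : ℕ, ∀ s, s0 ≤ s →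
        (L.map (fun x => cond x.2 (φlim x.1) (φlim x.1)⁻¹)).prod m
        = (L.map (fun x => cond x.2
            (Sum.elim (fun i => d (n + 1 + i)) (fun i => bA d w (j (i0 s)) (n + 1 + i)) x.1)
            ((Sum.elim (fun i => d (n + 1 + i))
              (fun i => bA d w (j (i0 s)) (n + 1 + i)) x.1)⁻¹))).prod m := by
      intro L
      induction L with
      | nil => exact fun m => ⟨0, fun s _ => rfl⟩
      | cons x L ih =>
        intro m
        obtain ⟨s1, hs1⟩ := ih m
        set q := (L.map (fun x => cond x.2 (φlim x.1) (φlim x.1)⁻¹)).prod m with hqdef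
        refine ⟨max s1 q, fun s hs => ?_⟩
        rw [List.map_cons, List.prod_cons, List.map_cons, List.prod_cons,
          Equiv.Perm.mul_apply, Equiv.Perm.mul_apply,
          ← hs1 s (le_trans (le_max_left _ _) hs), ← hqdef]
        have hqs : q ≤ s := le_trans (le_max_right _ _) hs
        rcases x with ⟨a, bb⟩
        rcases a with i | i
        · cases bb <;> rfl
        · cases bb
          · simp only [cond_false, Sum.elim_inr]
            exact hbinv' (n + 1 + i) q s hqs
          · simp only [cond_true, Sum.elim_inr]
            exact hbapp' (n + 1 + i) q s hqs
    apply Equiv.ext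
    intro m
    obtain ⟨s0, hs0⟩ := conv ((w n).toWord) m
    set s := max (max m n) s0 with hsdef
    have hms : m ≤ s := le_trans (le_trans (le_max_left _ _) (le_max_left _ _)) (le_refl _)
    have hns : n ≤ s := le_trans (le_trans (le_max_right _ _) (le_max_left _ _)) (le_refl _)
    have hnJ : n < j (i0 s) := by
      have h1 := hsi0 s
      have h2 := hj_ge (i0 s)
      omega
    rw [show (FreeGroup.lift (Sum.elim (fun i => d (n + 1 + i))
        (fun i => b (n + 1 + i))) (w n)) = FreeGroup.lift φlim (w n) from rfl]
    rw [hbapp' n m s hms, bA_of_lt hnJ, e1, e1]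
    exact (hs0 s (le_max_right _ _)).symm
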